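/- Let a > 0 and define kernels k(x,y) = e^{πi(x-y)² + 2πa(x-y)} and K(x,y) = e^{-πi(x-y)² - 2πa(x-y)}. Then for all real x, X: ∫_ℝ k(x,y) K(X,y) dy = δ(x - X) as distributions; concretely, for every test function f in the Gaussian-polynomial class W, ∫_ℝ (∫_ℝ k(x,y) K(X,y) f(X) dX) dy = f(x). -/

import Mathlib

open MeasureTheory Real Complex Filter

/-- The Gaussian-polynomial test class `W`. -/
def InW (f : ℝ → ℂ) : Prop :=
  f ∈ Submodule.span ℂ {g : ℝ → ℂ | ∃ (A : ℝ) (B : ℂ) (P : Polynomial ℂ), 0 < A ∧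
    g = fun x : ℝ => Complex.exp (-(A : ℂ) * (x : ℂ) ^ 2 / 2 + B * x) * P.eval (x : ℂ)}

/-- `k(x,y) = e^{πi(x-y)² + 2πa(x-y)}`. -/
noncomputable def kker (a x y : ℝ) : ℂ :=
  Complex.exp ((π : ℂ) * Complex.I * ((x : ℂ) - y) ^ 2 + 2 * (π : ℂ) * a * ((x : ℂ) - y))

/-- `K(x,y) = e^{-πi(x-y)² - 2πa(x-y)}`. -/
noncomputable def Kker (a x y : ℝ) : ℂ :=
  Complex.exp (-(π : ℂ) * Complex.I * ((x : ℂ) - y) ^ 2 - 2 * (π : ℂ) * a * ((x : ℂ) - y))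

/- ## Auxiliary lemmas -/

lemma re_ofReal_add_mul (r : ℝ) (B : ℂ) (X : ℝ) : ((r : ℂ) + B * X).re = r + B.re * X := by
  simp [Complex.add_re, Complex.mul_re]

lemma norm_cexp_I_add (s r : ℝ) :
    ‖Complex.exp ((s : ℂ) * Complex.I + (r : ℂ))‖ = Real.exp r := by
  rw [Complex.norm_exp]
  simp

lemma pow_le_factorial_mul_exp {t : ℝ} (ht : 0 ≤ t) (i : ℕ) :
    t ^ i ≤ ((i.factorial) : ℝ) * Real.exp t := by
  have h1 : t ^ i / (i.factorial) ≤ Real.exp t := by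
    calc t ^ i / (i.factorial) ≤ ∑ k ∈ Finset.range (i + 1), t ^ k / (k.factorial) := by
          refine Finset.single_le_sum (f := fun k => t ^ k / (k.factorial : ℝ))
            (fun k _ => by positivity) (Finset.self_mem_range_succ i)
        _ ≤ Real.exp t := Real.sum_le_exp_of_nonneg ht _
  have hi : (0:ℝ) < (i.factorial) := by positivity
  calc t ^ i = (t ^ i / (i.factorial)) * (i.factorial) := by field_simp
    _ ≤ Real.exp t * (i.factorial) := by gcongr
    _ = ((i.factorial) : ℝ) * Real.exp t := by ring

set_option maxHeartbeats 1000000 in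
/-- Every member of the class `W` is continuous and has a Gaussian bound. -/
lemma InW_props {f : ℝ → ℂ} (hf : InW f) :
    Continuous f ∧ ∃ C δ : ℝ, 0 < δ ∧ 0 ≤ C ∧
      ∀ X : ℝ, ‖f X‖ ≤ C * Real.exp (-δ * X ^ 2) := by
  refine Submodule.span_induction
    (p := fun g _ => Continuous g ∧ ∃ C δ : ℝ, 0 < δ ∧ 0 ≤ C ∧
      ∀ X : ℝ, ‖g X‖ ≤ C * Real.exp (-δ * X ^ 2)) ?_ ?_ ?_ ?_ hf
  · rintro g ⟨A, B, P, hA, rfl⟩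
    constructor
    · exact (Complex.continuous_exp.comp (by fun_prop)).mul
        (P.continuous.comp Complex.continuous_ofReal)
    · set c : ℝ := |B.re| + 1 with hc
      refine ⟨(∑ i ∈ Finset.range (P.natDegree + 1), ‖P.coeff i‖ * (i.factorial)) * Real.exp (c ^ 2 / A),
        A / 4, by positivity, by positivity, fun X => ?_⟩
      have hre : (-(A : ℂ) * (X : ℂ) ^ 2 / 2 + B * X).re = -A * X ^ 2 / 2 + B.re * X := by
        rw [show (-(A : ℂ) * (X : ℂ) ^ 2 / 2 + B * X) = ((-A * X ^ 2 / 2 : ℝ) : ℂ) + B * X by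
          push_cast; ring, re_ofReal_add_mul]
      have hnorm : ‖Complex.exp (-(A : ℂ) * (X : ℂ) ^ 2 / 2 + B * X)‖
          = Real.exp (-A * X ^ 2 / 2 + B.re * X) := by
        rw [Complex.norm_exp, hre]
      have hP : ‖P.eval (X : ℂ)‖ ≤ ∑ i ∈ Finset.range (P.natDegree + 1), ‖P.coeff i‖ * |X| ^ i := by
        rw [Polynomial.eval_eq_sum_range]
        refine (norm_sum_le _ _).trans ?_
        refine Finset.sum_le_sum fun i _ => ?_
        rw [norm_mul, norm_pow, Complex.norm_real, Real.norm_eq_abs]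
      have habs : ∀ i ∈ Finset.range (P.natDegree + 1),
          ‖P.coeff i‖ * |X| ^ i ≤ ‖P.coeff i‖ * (i.factorial) * Real.exp |X| := by
        intro i _
        rw [mul_assoc]
        exact mul_le_mul_of_nonneg_left (pow_le_factorial_mul_exp (abs_nonneg X) i) (norm_nonneg _)
      have hquad : -A * X ^ 2 / 2 + B.re * X + |X| ≤ c ^ 2 / A + (-(A/4) * X ^ 2) := by
        have h1 : B.re * X ≤ |B.re| * |X| := by
          calc B.re * X ≤ |B.re * X| := le_abs_self _
            _ = |B.re| * |X| := abs_mul _ _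
        have key : c * |X| ≤ A / 4 * X ^ 2 + c ^ 2 / A := by
          rw [← _root_.sq_abs X, ← sub_nonneg]
          have e : A / 4 * |X| ^ 2 + c ^ 2 / A - c * |X| = (A * |X| - 2 * c) ^ 2 / (4 * A) := by
            field_simp; ring_nf
          rw [e]; positivity
        have h5 : B.re * X + |X| ≤ c * |X| := by
          have : c * |X| = |B.re| * |X| + |X| := by rw [hc]; ring
          linarith
        linarith
      calc ‖Complex.exp (-(A : ℂ) * (X : ℂ) ^ 2 / 2 + B * X) * P.eval (X : ℂ)‖
          = Real.exp (-A * X ^ 2 / 2 + B.re * X) * ‖P.eval (X : ℂ)‖ := by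
            rw [norm_mul, hnorm]
        _ ≤ Real.exp (-A * X ^ 2 / 2 + B.re * X) *
              ((∑ i ∈ Finset.range (P.natDegree + 1), ‖P.coeff i‖ * (i.factorial)) * Real.exp |X|) := by
            refine mul_le_mul_of_nonneg_left (hP.trans ?_) (Real.exp_nonneg _)
            calc ∑ i ∈ Finset.range (P.natDegree + 1), ‖P.coeff i‖ * |X| ^ i
                ≤ ∑ i ∈ Finset.range (P.natDegree + 1),
                    ‖P.coeff i‖ * (i.factorial) * Real.exp |X| := Finset.sum_le_sum habs
              _ = (∑ i ∈ Finset.range (P.natDegree + 1), ‖P.coeff i‖ * (i.factorial)) *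
                    Real.exp |X| := (Finset.sum_mul _ _ _).symm
        _ = (∑ i ∈ Finset.range (P.natDegree + 1), ‖P.coeff i‖ * (i.factorial)) *
              Real.exp (-A * X ^ 2 / 2 + B.re * X + |X|) := by
            simp only [Real.exp_add]; ring
        _ ≤ (∑ i ∈ Finset.range (P.natDegree + 1), ‖P.coeff i‖ * (i.factorial)) *
              (Real.exp (c ^ 2 / A) * Real.exp (-(A/4) * X ^ 2)) := by
            rw [← Real.exp_add]
            refine mul_le_mul_of_nonneg_left (Real.exp_le_exp.2 hquad) ?_
            positivity
        _ = (∑ i ∈ Finset.range (P.natDegree + 1), ‖P.coeff i‖ * (i.factorial)) * Real.exp (c ^ 2 / A) *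
              Real.exp (-(A/4) * X ^ 2) := by ring
  · exact ⟨continuous_const, 0, 1, one_pos, le_refl _, fun X => by simp⟩
  · rintro g h _ _ ⟨hgc, Cg, δg, hδg, hCg, hgb⟩ ⟨hhc, Ch, δh, hδh, hCh, hhb⟩
    refine ⟨hgc.add hhc, Cg + Ch, min δg δh, lt_min hδg hδh, by positivity, fun X => ?_⟩
    calc ‖(g + h) X‖ ≤ ‖g X‖ + ‖h X‖ := norm_add_le _ _
      _ ≤ Cg * Real.exp (-δg * X ^ 2) + Ch * Real.exp (-δh * X ^ 2) := add_le_add (hgb X) (hhb X)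
      _ ≤ Cg * Real.exp (-min δg δh * X ^ 2) + Ch * Real.exp (-min δg δh * X ^ 2) := by
          gcongr <;> [exact min_le_left _ _; exact min_le_right _ _] <;> positivity
      _ = (Cg + Ch) * Real.exp (-min δg δh * X ^ 2) := by ring
  · rintro r g _ ⟨hgc, Cg, δg, hδg, hCg, hgb⟩
    refine ⟨hgc.const_smul r, ‖r‖ * Cg, δg, hδg, by positivity, fun X => ?_⟩
    calc ‖(r • g) X‖ = ‖r‖ * ‖g X‖ := by simp
      _ ≤ ‖r‖ * (Cg * Real.exp (-δg * X ^ 2)) :=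
          mul_le_mul_of_nonneg_left (hgb X) (norm_nonneg r)
      _ = ‖r‖ * Cg * Real.exp (-δg * X ^ 2) := by ring

lemma integrable_exp_quad {δ : ℝ} (hδ : 0 < δ) (t : ℝ) :
    Integrable fun w : ℝ => Real.exp (-δ * w ^ 2 + t * w) := by
  have h := (integrable_cexp_quadratic (b := (δ : ℂ)) (by simpa using hδ) (t : ℂ) 0).norm
  refine h.congr (Filter.Eventually.of_forall fun w => ?_)
  show ‖Complex.exp (-(δ:ℂ) * w ^ 2 + t * w + 0)‖ = Real.exp (-δ * w ^ 2 + t * w)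
  rw [show (-(δ:ℂ) * w ^ 2 + t * w + 0 : ℂ) = ((-δ * w ^ 2 + t * w : ℝ) : ℂ) by push_cast; ring]
  rw [Complex.norm_exp, Complex.ofReal_re]

theorem kernel_delta_identity (a : ℝ) (ha : 0 < a) (f : ℝ → ℂ) (hf : InW f) (x : ℝ) :
    Tendsto
      (fun ε : ℝ => ∫ y : ℝ,
        Complex.exp (-(ε : ℂ) * (y : ℂ) ^ 2) * ∫ X : ℝ, kker a x y * Kker a X y * f X)
      (nhdsWithin 0 (Set.Ioi 0)) (nhds (f x)) := by
  obtain ⟨hcont, C, δ, hδ, hC, hbound⟩ := InW_props hf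
  set φ : ℝ → ℂ := fun X =>
    Complex.exp (((π * (x ^ 2 - X ^ 2) : ℝ) : ℂ) * Complex.I + ((2 * π * a * (x - X) : ℝ) : ℂ))
      * f X with hφ
  have hφc : Continuous φ := (Complex.continuous_exp.comp (by fun_prop)).mul hcont
  have hφx : φ x = f x := by simp [hφ]
  have hφint : Integrable φ := by
    refine Integrable.mono' (((integrable_exp_quad hδ (-(2 * π * a))).const_mul
      (C * Real.exp (2 * π * a * x)))) hφc.aestronglyMeasurable
      (Filter.Eventually.of_forall fun X => ?_)
    rw [hφ, norm_mul]
    rw [norm_cexp_I_add]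
    calc Real.exp (2 * π * a * (x - X)) * ‖f X‖
        ≤ Real.exp (2 * π * a * (x - X)) * (C * Real.exp (-δ * X ^ 2)) :=
          mul_le_mul_of_nonneg_left (hbound X) (Real.exp_nonneg _)
      _ = C * Real.exp (2 * π * a * (x - X) + -δ * X ^ 2) := by
          rw [Real.exp_add]; ring
      _ = C * Real.exp (2 * π * a * x + (-δ * X ^ 2 + -(2 * π * a) * X)) := by
          congr 1; ring
      _ = C * Real.exp (2 * π * a * x) * Real.exp (-δ * X ^ 2 + -(2 * π * a) * X) := by
          rw [Real.exp_add]; ring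
  -- the peak-function limit
  have key := Real.tendsto_integral_gaussian_smul' hφint (hφc.continuousAt (x := x))
  rw [hφx] at key
  have comp := key.comp tendsto_inv_nhdsGT_zero
  refine comp.congr' ?_
  filter_upwards [self_mem_nhdsWithin] with ε hε
  have hε' : (0:ℝ) < ε := hε
  have hεne : (ε : ℂ) ≠ 0 := by exact_mod_cast hε'.ne'
  -- combine the kernels and the regulariser into a single exponential
  have key_exp : ∀ y X : ℝ, Complex.exp (-(ε:ℂ) * (y:ℂ)^2) * (kker a x y * Kker a X y * f X)
      = Complex.exp (-(ε:ℂ) * (y:ℂ)^2 + (-2*(π:ℂ)*Complex.I*((x:ℂ)-X)) * y +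
          (((2*π*a*(x-X) : ℝ) : ℂ) + ((π*(x^2-X^2) : ℝ):ℂ) * Complex.I)) * f X := by
    intro y X
    calc Complex.exp (-(ε:ℂ) * (y:ℂ)^2) * (kker a x y * Kker a X y * f X)
        = (Complex.exp (-(ε:ℂ) * (y:ℂ)^2) * (kker a x y * Kker a X y)) * f X := by ring
      _ = _ := by
          unfold kker Kker
          rw [← Complex.exp_add, ← Complex.exp_add]
          congr 2
          push_cast
          ring
  -- product integrability
  have hFm : AEStronglyMeasurable (Function.uncurry fun y X : ℝ =>
      Complex.exp (-(ε:ℂ) * (y:ℂ)^2) * (kker a x y * Kker a X y * f X)) (volume.prod volume) := by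
    apply Continuous.aestronglyMeasurable
    unfold Function.uncurry kker Kker
    fun_prop
  have hFb : ∀ p : ℝ × ℝ,
      ‖Complex.exp (-(ε:ℂ) * (p.1:ℂ)^2) * (kker a x p.1 * Kker a p.2 p.1 * f p.2)‖
      ≤ Real.exp (-ε * p.1^2) *
        ((C * Real.exp (2*π*a*x)) * Real.exp (-δ * p.2^2 + -(2*π*a) * p.2)) := by
    rintro ⟨y, X⟩
    rw [key_exp y X, norm_mul]
    rw [show (-(ε:ℂ) * (y:ℂ)^2 + (-2*(π:ℂ)*Complex.I*((x:ℂ)-X)) * y +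
          (((2*π*a*(x-X) : ℝ) : ℂ) + ((π*(x^2-X^2) : ℝ):ℂ) * Complex.I))
        = (((-2*π*(x-X)*y + π*(x^2-X^2) : ℝ)):ℂ) * Complex.I
          + ((-ε*y^2 + 2*π*a*(x-X) : ℝ):ℂ) from by push_cast; ring, norm_cexp_I_add]
    calc Real.exp (-ε*y^2 + 2*π*a*(x-X)) * ‖f X‖
        ≤ Real.exp (-ε*y^2 + 2*π*a*(x-X)) * (C * Real.exp (-δ * X^2)) :=
          mul_le_mul_of_nonneg_left (hbound X) (Real.exp_nonneg _)
      _ = Real.exp (-ε*y^2 + (2*π*a*x + -(2*π*a)*X)) * (C * Real.exp (-δ * X^2)) := by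
          congr 2; ring
      _ = Real.exp (-ε * y^2) *
            ((C * Real.exp (2*π*a*x)) * Real.exp (-δ * X^2 + -(2*π*a) * X)) := by
          simp only [Real.exp_add]; ring
  have hprod : Integrable (Function.uncurry fun y X : ℝ =>
      Complex.exp (-(ε:ℂ) * (y:ℂ)^2) * (kker a x y * Kker a X y * f X)) (volume.prod volume) := by
    refine Integrable.mono' ((Integrable.mul_prod (integrable_exp_neg_mul_sq hε')
      ((integrable_exp_quad hδ _).const_mul (C * Real.exp (2*π*a*x))))) hFm
      (Filter.Eventually.of_forall fun p => hFb p)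
  -- main computation for fixed ε
  have main : (∫ y : ℝ, Complex.exp (-(ε:ℂ) * (y:ℂ)^2) * ∫ X : ℝ, kker a x y * Kker a X y * f X)
      = ∫ w : ℝ, (((π:ℂ) * ((ε⁻¹ : ℝ):ℂ)) ^ (((Module.finrank ℝ ℝ : ℕ):ℂ) / 2) *
          Complex.exp (-(π:ℂ)^2 * ((ε⁻¹:ℝ):ℂ) * ((‖x - w‖ : ℝ):ℂ)^2)) • φ w := by
    calc (∫ y : ℝ, Complex.exp (-(ε:ℂ) * (y:ℂ)^2) * ∫ X : ℝ, kker a x y * Kker a X y * f X)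
        = ∫ y : ℝ, ∫ X : ℝ, Complex.exp (-(ε:ℂ) * (y:ℂ)^2) *
            (kker a x y * Kker a X y * f X) := by
          simp_rw [← integral_const_mul]
      _ = ∫ X : ℝ, ∫ y : ℝ, Complex.exp (-(ε:ℂ) * (y:ℂ)^2) *
            (kker a x y * Kker a X y * f X) := integral_integral_swap hprod
      _ = ∫ X : ℝ, (∫ y : ℝ, Complex.exp (-(ε:ℂ) * (y:ℂ)^2 +
            (-2*(π:ℂ)*Complex.I*((x:ℂ)-X)) * y +
            (((2*π*a*(x-X) : ℝ) : ℂ) + ((π*(x^2-X^2) : ℝ):ℂ) * Complex.I))) * f X := by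
          refine integral_congr_ae (Filter.Eventually.of_forall fun X => ?_)
          simp_rw [key_exp]
          rw [integral_mul_const]
      _ = ∫ X : ℝ, (((π:ℂ) / ε) ^ (1/2 : ℂ) *
            Complex.exp ((((2*π*a*(x-X) : ℝ) : ℂ) + ((π*(x^2-X^2) : ℝ):ℂ) * Complex.I)
              - (-2*(π:ℂ)*Complex.I*((x:ℂ)-X))^2 / (4 * (-(ε:ℂ))))) * f X := by
          refine integral_congr_ae (Filter.Eventually.of_forall fun X => ?_)
          beta_reduce
          rw [integral_cexp_quadratic (b := -(ε:ℂ)) (by simpa using hε') _ _, neg_neg]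
      _ = ∫ w : ℝ, (((π:ℂ) * ((ε⁻¹ : ℝ):ℂ)) ^ (((Module.finrank ℝ ℝ : ℕ):ℂ) / 2) *
            Complex.exp (-(π:ℂ)^2 * ((ε⁻¹:ℝ):ℂ) * ((‖x - w‖ : ℝ):ℂ)^2)) • φ w := by
          refine integral_congr_ae (Filter.Eventually.of_forall fun X => ?_)
          beta_reduce
          have hn : ((‖x - X‖ : ℝ) : ℂ)^2 = ((x:ℂ) - X)^2 := by
            rw [Real.norm_eq_abs]
            norm_cast
            exact _root_.sq_abs _
          have hI : (-2*(π:ℂ)*Complex.I*((x:ℂ)-X))^2 = -((2*(π:ℂ)*((x:ℂ)-X))^2) := by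
            rw [show (-2*(π:ℂ)*Complex.I*((x:ℂ)-X))^2
              = (2*(π:ℂ)*((x:ℂ)-X))^2 * Complex.I^2 from by ring, Complex.I_sq]
            ring
          rw [hφ, smul_eq_mul, Module.finrank_self, Nat.cast_one, hn, hI]
          rw [show ((π:ℂ) * ((ε⁻¹ : ℝ):ℂ)) = (π:ℂ) / ε from by
            rw [Complex.ofReal_inv]; ring]
          have hexp : Complex.exp ((((2*π*a*(x-X) : ℝ)):ℂ) + (((π*(x^2-X^2) : ℝ)):ℂ) * Complex.I
                - -(2*(π:ℂ)*((x:ℂ)-X))^2 / (4 * -(ε:ℂ)))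
              = Complex.exp (-(π:ℂ)^2 * ((ε⁻¹:ℝ):ℂ) * ((x:ℂ)-X)^2) *
                Complex.exp ((((π*(x^2-X^2) : ℝ)):ℂ) * Complex.I + (((2*π*a*(x-X) : ℝ)):ℂ)) := by
            rw [← Complex.exp_add]
            congr 1
            rw [Complex.ofReal_inv]
            field_simp
            ring
          rw [hexp]
          ring
  simp only [Function.comp_apply]
  exact main.symm
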